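/- For j a nonnegative integer, the Fourier-type integral ∫_{-∞}^{∞} e^{ikx} (2 cosh(sk))^{-(j+1)} dk is a strictly positive real number for every real x (here s > 0 is a fixed real constant). -/

import Mathlib

open MeasureTheory Complex

theorem stmt_0 (s : ℝ) (hs : 0 < s) (j : ℕ) (x : ℝ) :
    (∫ k : ℝ, Complex.exp (Complex.I * k * x) /
        ((2 * Real.cosh (s * k) : ℝ) : ℂ) ^ (j + 1)).im = 0 ∧
    0 < (∫ k : ℝ, Complex.exp (Complex.I * k * x) /
        ((2 * Real.cosh (s * k) : ℝ) : ℂ) ^ (j + 1)).re := by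
  have hs' : s ≠ 0 := ne_of_gt hs
  have hsC : (s:ℂ) ≠ 0 := Complex.ofReal_ne_zero.mpr hs'
  set a : ℕ := j + 1 with ha
  set z : ℂ := ((a/2 : ℝ) : ℂ) + ((x/(2*s) : ℝ) : ℂ) * Complex.I with hz
  set w : ℂ := ((a/2 : ℝ) : ℂ) - ((x/(2*s) : ℝ) : ℂ) * Complex.I with hw
  set f : ℝ → ℝ := fun t => Real.exp (2*s*t) / (1 + Real.exp (2*s*t)) with hf
  set f' : ℝ → ℝ := fun t => 2*s*Real.exp (2*s*t) / (1 + Real.exp (2*s*t))^2 with hf'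
  set g : ℝ → ℂ := fun p => ((p:ℝ):ℂ)^(z-1) * (((1-p : ℝ)):ℂ)^(w-1) with hg
  have hz_re : 0 < z.re := by
    simp only [hz, Complex.add_re, Complex.ofReal_re, Complex.mul_re, Complex.I_re,
      Complex.I_im, Complex.ofReal_im, mul_zero, zero_mul, sub_zero, mul_one]
    have : (0:ℝ) < (a:ℝ)/2 := by positivity
    simpa using this
  have hw_re : 0 < w.re := by
    simp only [hw, Complex.sub_re, Complex.ofReal_re, Complex.mul_re, Complex.I_re,
      Complex.I_im, Complex.ofReal_im, mul_zero, zero_mul, sub_zero, mul_one]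
    have : (0:ℝ) < (a:ℝ)/2 := by positivity
    simpa using this
  have hconj : w = (starRingEnd ℂ) z := by
    rw [hz, hw, map_add, map_mul, Complex.conj_I, Complex.conj_ofReal, Complex.conj_ofReal]
    ring
  -- derivative
  have hderiv : ∀ t : ℝ, HasDerivAt f (f' t) t := by
    intro t
    have h1 : HasDerivAt (fun t : ℝ => Real.exp (2*s*t)) (Real.exp (2*s*t) * (2*s)) t := by
      have := ((hasDerivAt_id t).const_mul (2*s)).exp
      simpa using this
    have h2 : HasDerivAt (fun t : ℝ => 1 + Real.exp (2*s*t)) (Real.exp (2*s*t) * (2*s)) t :=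
      (h1.const_add 1)
    have hne : (1 + Real.exp (2*s*t)) ≠ 0 := by positivity
    have := h1.div h2 hne
    refine this.congr_deriv ?_
    simp only [hf']
    field_simp
    ring
  -- injectivity
  have hinj : Function.Injective f := by
    intro t1 t2 h
    simp only [hf] at h
    have h1 : (0:ℝ) < 1 + Real.exp (2*s*t1) := by positivity
    have h2 : (0:ℝ) < 1 + Real.exp (2*s*t2) := by positivity
    rw [div_eq_div_iff h1.ne' h2.ne'] at h
    have : Real.exp (2*s*t1) = Real.exp (2*s*t2) := by nlinarith
    have := Real.exp_injective this
    have h2s : (2*s) ≠ 0 := by positivity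
    exact mul_left_cancel₀ h2s this
  -- range
  have hrange : Set.range f = Set.Ioo (0:ℝ) 1 := by
    ext y
    constructor
    · rintro ⟨t, rfl⟩
      have h1 : (0:ℝ) < 1 + Real.exp (2*s*t) := by positivity
      constructor
      · exact div_pos (Real.exp_pos _) h1
      · rw [div_lt_one h1]; linarith [Real.exp_pos (2*s*t)]
    · rintro ⟨hy0, hy1⟩
      refine ⟨Real.log (y/(1-y)) / (2*s), ?_⟩
      have h1y : (0:ℝ) < 1 - y := by linarith
      have hyy : (0:ℝ) < y/(1-y) := div_pos hy0 h1y
      have h2s : (2*s) ≠ 0 := by positivity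
      simp only [hf]
      rw [mul_div_cancel₀ _ h2s, Real.exp_log hyy]
      field_simp
      ring
  -- pointwise identity
  have hpt : ∀ t : ℝ, |f' t| • g (f t) =
      (2*s) • (Complex.exp (Complex.I * t * x) / ((2 * Real.cosh (s * t) : ℝ) : ℂ) ^ (j + 1)) := by
    intro t
    have hu : (0:ℝ) < Real.exp (2*s*t) := Real.exp_pos _
    set u := Real.exp (2*s*t) with hu'
    have h1u : (0:ℝ) < 1 + u := by positivity
    set m := Real.log (1+u) with hm'
    have hcp : ∀ (r:ℝ), 0 < r → ∀ c:ℂ, ((r:ℝ):ℂ)^c = Complex.exp (((Real.log r : ℝ):ℂ) * c) := by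
      intro r hr c
      rw [Complex.cpow_def_of_ne_zero (Complex.ofReal_ne_zero.mpr hr.ne'),
        Complex.ofReal_log hr.le]
    have hft : f t = u/(1+u) := rfl
    have hft1 : (1 - f t : ℝ) = 1/(1+u) := by rw [hft]; field_simp; ring
    have hlog1 : Real.log (u/(1+u)) = 2*s*t - m := by
      rw [Real.log_div hu.ne' h1u.ne', hm', hu', Real.log_exp]
    have hlog2 : Real.log (1/(1+u)) = -m := by
      rw [one_div, Real.log_inv, hm']
    have hg1 : g (f t) = Complex.exp ((((2*s*t - m : ℝ)):ℂ) * (z-1) + (((-m : ℝ)):ℂ) * (w-1)) := by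
      simp only [hg]
      rw [hft1, hft, hcp _ (div_pos hu h1u), hcp _ (by positivity : (0:ℝ) < 1/(1+u)),
        hlog1, hlog2, ← Complex.exp_add]
    have hexp2m : Real.exp (2*m) = (1+u)^2 := by
      rw [two_mul, Real.exp_add, Real.exp_log h1u]; ring
    have hfd2 : f' t = 2*s*Real.exp (2*s*t - 2*m) := by
      simp only [hf']
      rw [Real.exp_sub, hexp2m]
      ring
    have hfpos : 0 < f' t := by rw [hfd2]; positivity
    have hcoshpos : (0:ℝ) < 2 * Real.cosh (s*t) := by positivity
    have hcosh : 2 * Real.cosh (s*t) = Real.exp (-(s*t)) * (1+u) := by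
      rw [Real.cosh_eq, hu']
      have h1 : Real.exp (-(s*t)) * Real.exp (2*s*t) = Real.exp (s*t) := by
        rw [← Real.exp_add]; ring_nf
      nlinarith [h1]
    have hLc : Real.log (2 * Real.cosh (s*t)) = m - s*t := by
      rw [hcosh, Real.log_mul (Real.exp_ne_zero _) h1u.ne', Real.log_exp, hm']
      ring
    have hR : ((2 * Real.cosh (s * t) : ℝ) : ℂ) ^ (j + 1) =
        Complex.exp ((a:ℂ) * (((m - s*t : ℝ)):ℂ)) := by
      have h2 : ((2 * Real.cosh (s*t) : ℝ):ℂ) =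
          Complex.exp (((Real.log (2*Real.cosh (s*t)) : ℝ):ℂ)) := by
        rw [← Complex.ofReal_exp, Real.exp_log hcoshpos]
      rw [h2, ← Complex.exp_nat_mul, hLc]
    rw [hg1, hR, abs_of_pos hfpos, hfd2]
    rw [Complex.real_smul, Complex.real_smul]
    rw [Complex.ofReal_mul, Complex.ofReal_exp, mul_assoc, ← Complex.exp_add,
      div_eq_mul_inv, ← Complex.exp_neg, ← Complex.exp_add]
    congr 2
    rw [hz, hw]
    push_cast
    field_simp
    ring
  -- change of variables
  have key := integral_image_eq_integral_abs_deriv_smul MeasurableSet.univ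
    (fun t _ => (hderiv t).hasDerivWithinAt) (hinj.injOn) g
  rw [Set.image_univ, hrange, Measure.restrict_univ] at key
  have key2 : (∫ t : ℝ, |f' t| • g (f t)) =
      (2*s) • ∫ k : ℝ, Complex.exp (Complex.I * k * x) /
        ((2 * Real.cosh (s * k) : ℝ) : ℂ) ^ (j + 1) := by
    simp only [hpt]
    rw [integral_smul]
  have hbeta : Complex.betaIntegral z w = ∫ p in Set.Ioo (0:ℝ) 1, g p := by
    rw [Complex.betaIntegral, intervalIntegral.integral_of_le zero_le_one,
      ← MeasureTheory.integral_Ioc_eq_integral_Ioo]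
    congr 1
    funext p
    simp only [hg]
    push_cast
    ring
  -- Gamma computation
  have hzw : z + w = (j:ℂ) + 1 := by
    rw [hz, hw]
    push_cast [ha]
    ring
  have hG := Complex.Gamma_mul_Gamma_eq_betaIntegral hz_re hw_re
  rw [hzw, Complex.Gamma_nat_eq_factorial, hconj, Complex.Gamma_conj,
    Complex.mul_conj] at hG
  -- hG : ↑(normSq (Gamma z)) = ↑(j !) * betaIntegral z w
  rw [← hconj] at hG
  have hfac : (0:ℝ) < (Nat.factorial j : ℝ) := by positivity
  have hbval : Complex.betaIntegral z w =
      ((Complex.normSq (Complex.Gamma z) / (Nat.factorial j : ℝ) : ℝ) : ℂ) := by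
    have hjC : ((Nat.factorial j : ℝ) : ℂ) ≠ 0 := by
      exact_mod_cast hfac.ne'
    rw [Complex.ofReal_div, eq_div_iff hjC]
    push_cast
    linear_combination -hG
  have hfin : (2*s) • (∫ k : ℝ, Complex.exp (Complex.I * k * x) /
        ((2 * Real.cosh (s * k) : ℝ) : ℂ) ^ (j + 1)) =
      ((Complex.normSq (Complex.Gamma z) / (Nat.factorial j : ℝ) : ℝ) : ℂ) := by
    rw [← key2, ← key, ← hbeta, hbval]
  have hGne : Complex.Gamma z ≠ 0 := Complex.Gamma_ne_zero_of_re_pos hz_re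
  have hnormpos : 0 < Complex.normSq (Complex.Gamma z) := Complex.normSq_pos.mpr hGne
  have him : (∫ k : ℝ, Complex.exp (Complex.I * k * x) /
      ((2 * Real.cosh (s * k) : ℝ) : ℂ) ^ (j + 1)).im = 0 := by
    have h1 := congrArg Complex.im hfin
    simp only [Complex.smul_im, smul_eq_mul, Complex.ofReal_im] at h1
    have h2s : (2*s) ≠ 0 := by positivity
    rcases mul_eq_zero.mp h1 with h | h
    · exact absurd h h2s
    · exact h
  have hre : 0 < (∫ k : ℝ, Complex.exp (Complex.I * k * x) /
      ((2 * Real.cosh (s * k) : ℝ) : ℂ) ^ (j + 1)).re := by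
    have h1 := congrArg Complex.re hfin
    simp only [Complex.smul_re, smul_eq_mul, Complex.ofReal_re] at h1
    nlinarith [div_pos hnormpos hfac, h1]
  exact ⟨him, hre⟩
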